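/- Conversely, let P : E → B be a cloven Grothendieck fibration such that for each morphism f : A → B of B, the inverse image functor f^* : E_B → E_A admits a left adjoint f_* with unit η^f. Then P is also an opfibration: for each Y in E_A the composite Y → f^* f_* Y → f_* Y (unit followed by the Cartesian lift) is an opCartesian lift of f at Y. -/

import Mathlib

open CategoryTheory Functor

variable {𝒮 𝒳 : Type*} [Category 𝒮] [Category 𝒳]

/-- Let `P : 𝒳 ⥤ 𝒮` be a cloven fibration, `f : R ⟶ S` a morphism of the base,
`pb : Fiber P S ⥤ Fiber P R` the inverse image functor induced by the chosen Cartesian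
lifts `ε`, and suppose `pb` admits a left adjoint `ps` with adjunction `adj` (whose unit is
`adj.unit`).  Then for every `Y` in the fibre over `R`, the composite of the unit with the
Cartesian lift, `Y ⟶ pb (ps Y) ⟶ ps Y`, is an opCartesian lift of `f` at `Y`; hence `P` is
also an opfibration. -/
theorem unit_comp_cartesian_lift_isStronglyCocartesian (P : 𝒳 ⥤ 𝒮) [P.IsFibered]
    {R S : 𝒮} (f : R ⟶ S)
    (pb : P.Fiber S ⥤ P.Fiber R)
    (ε : ∀ X : P.Fiber S, Fiber.fiberInclusion.obj (pb.obj X) ⟶ Fiber.fiberInclusion.obj X)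
    (hε : ∀ X : P.Fiber S, P.IsStronglyCartesian f (ε X))
    (hεnat : ∀ {X X' : P.Fiber S} (u : X ⟶ X'),
      Fiber.fiberInclusion.map (pb.map u) ≫ ε X' = ε X ≫ Fiber.fiberInclusion.map u)
    (ps : P.Fiber R ⥤ P.Fiber S) (adj : ps ⊣ pb) :
    ∀ Y : P.Fiber R,
      P.IsStronglyCocartesian f
        (Fiber.fiberInclusion.map (adj.unit.app Y) ≫ ε (ps.obj Y)) := by
  intro Y
  haveI := fun X => (hε X).toIsHomLift
  haveI : P.IsHomLift f (Fiber.fiberInclusion.map (adj.unit.app Y) ≫ ε (ps.obj Y)) :=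
    IsHomLift.comp_lift_id_left P f _ _
  constructor
  intro b' g φ' hφ'
  -- choose a strongly cartesian lift `ψ : w ⟶ b'` of `g`
  let ψ : Fiber.fiberInclusion.obj (⟨IsPreFibered.pullbackObj rfl g, IsPreFibered.pullbackObj_proj rfl g⟩ : P.Fiber S) ⟶ b' :=
    IsPreFibered.pullbackMap (rfl : P.obj b' = P.obj b') g
  haveI : P.IsStronglyCartesian g ψ :=
    IsFibered.isStronglyCartesian_of_isCartesian P g (IsPreFibered.pullbackMap (rfl : P.obj b' = P.obj b') g)
  -- the domain of `ψ` as an object of the fiber over `S`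
  let X : P.Fiber S := ⟨IsPreFibered.pullbackObj rfl g, IsPreFibered.pullbackObj_proj rfl g⟩
  have hψ : (ψ : Fiber.fiberInclusion.obj X ⟶ b') = ψ := rfl
  -- factor `φ'` through `ψ` over `f`
  let τ : Fiber.fiberInclusion.obj Y ⟶ Fiber.fiberInclusion.obj X :=
    IsStronglyCartesian.map P g ψ (rfl : f ≫ g = f ≫ g) φ'
  have hτfac : τ ≫ ψ = φ' := IsStronglyCartesian.fac P g ψ _ φ'
  haveI : P.IsHomLift f τ := IsStronglyCartesian.map_isHomLift P g ψ _ φ'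
  -- factor `τ` through `ε X` over `𝟙 R`
  let σ : Fiber.fiberInclusion.obj Y ⟶ Fiber.fiberInclusion.obj (pb.obj X) :=
    IsStronglyCartesian.map P f (ε X) ((Category.id_comp f).symm) τ
  have hσfac : σ ≫ ε X = τ := IsStronglyCartesian.fac P f (ε X) _ τ
  haveI : P.IsHomLift (𝟙 R) σ := IsStronglyCartesian.map_isHomLift P f (ε X) _ τ
  let σ' : Y ⟶ pb.obj X := ⟨σ, this⟩
  -- transpose across the adjunction
  let χ₀ : ps.obj Y ⟶ X := (adj.homEquiv Y X).symm σ'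
  have hχ₀ : adj.unit.app Y ≫ pb.map χ₀ = σ' := by
    have := (adj.homEquiv Y X).apply_symm_apply σ'
    rwa [Adjunction.homEquiv_unit] at this
  refine ⟨Fiber.fiberInclusion.map χ₀ ≫ ψ, ⟨?_, ?_⟩, ?_⟩
  · have : P.IsHomLift (𝟙 S ≫ g) (Fiber.fiberInclusion.map χ₀ ≫ ψ) := inferInstance
    simpa using this
  · -- factorization
    rw [Category.assoc, ← Category.assoc (ε (ps.obj Y)), ← hεnat χ₀, Category.assoc,
      ← Category.assoc, ← Fiber.fiberInclusion.map_comp, hχ₀]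
    show σ ≫ ε X ≫ ψ = φ'
    rw [← Category.assoc, hσfac, hτfac]
  · -- uniqueness
    rintro χ' ⟨hχ'lift, hχ'fac⟩
    -- factor `χ'` through `ψ` over `𝟙 S`
    let μ : Fiber.fiberInclusion.obj (ps.obj Y) ⟶ Fiber.fiberInclusion.obj X :=
      IsStronglyCartesian.map P g ψ ((Category.id_comp g).symm) χ'
    have hμfac : μ ≫ ψ = χ' := IsStronglyCartesian.fac P g ψ _ χ'
    haveI : P.IsHomLift (𝟙 S) μ := IsStronglyCartesian.map_isHomLift P g ψ _ χ'
    let μ' : ps.obj Y ⟶ X := ⟨μ, this⟩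
    -- it suffices to show μ' = χ₀
    suffices hμχ : μ' = χ₀ by
      rw [← hμfac]
      congr 1
      exact congrArg Subtype.val hμχ
    -- compare over ψ : both (unit ≫ ε ≫ μ) and τ compose with ψ to φ'
    have h1 : (Fiber.fiberInclusion.map (adj.unit.app Y) ≫ ε (ps.obj Y) ≫ μ) ≫ ψ = τ ≫ ψ := by
      rw [hτfac, ← hχ'fac, ← hμfac]
      simp only [Category.assoc]
    haveI : P.IsHomLift f (ε (ps.obj Y) ≫ μ) := IsHomLift.comp_lift_id_right' P f _ S μ
    haveI : P.IsHomLift f (Fiber.fiberInclusion.map (adj.unit.app Y) ≫ ε (ps.obj Y) ≫ μ) :=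
      IsHomLift.comp_lift_id_left P f _ _
    have h2 : Fiber.fiberInclusion.map (adj.unit.app Y) ≫ ε (ps.obj Y) ≫ μ = τ :=
      IsStronglyCartesian.ext P g ψ f h1
    -- rewrite using naturality of ε
    have h3 : (Fiber.fiberInclusion.map (adj.unit.app Y ≫ pb.map μ')) ≫ ε X = σ ≫ ε X := by
      rw [Fiber.fiberInclusion.map_comp, Category.assoc, hεnat μ', hσfac, ← h2]
      rfl
    haveI : P.IsHomLift (𝟙 R) (Fiber.fiberInclusion.map (adj.unit.app Y ≫ pb.map μ')) :=
      inferInstance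
    have h4 : Fiber.fiberInclusion.map (adj.unit.app Y ≫ pb.map μ')
        = Fiber.fiberInclusion.map σ' :=
      IsStronglyCartesian.ext P f (ε X) (𝟙 R) h3
    have h5 : adj.unit.app Y ≫ pb.map μ' = σ' := Fiber.hom_ext h4
    -- conclude by the adjunction
    apply (adj.homEquiv Y X).injective
    rw [Adjunction.homEquiv_unit, Adjunction.homEquiv_unit, hχ₀]
    exact h5
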